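/- Let F : Δ_A → [0,1]^K be monotone and L-Lipschitz, let τ > 0, and let π*_τ ∈ Δ_A be the unique solution of the τ-regularized variational inequality (F(π*_τ) − τπ*_τ)ᵀ(π*_τ − π) ≥ 0 for all π ∈ Δ_A. Let π¹, …, π^N ∈ Δ_A satisfy ‖π^i − π*_τ‖₂ ≤ δ for all i. Then for every player i, E^i_exp(π¹, …, π^N) ≤ 2τ + L(2√2 + 4)/N + 4L/√N + (√K + 4L√(2K)) δ. -/

import Mathlib

open scoped BigOperators
open MeasureTheory ProbabilityTheory Finset

noncomputable section

/-- The probability simplex over `Fin K`, inside Euclidean space (ℓ2 norm). -/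
def simplex (K : ℕ) : Set (EuclideanSpace ℝ (Fin K)) :=
  {x | (∀ a, 0 ≤ x a) ∧ ∑ a, x a = 1}

/-- Empirical occupancy measure `μ̂ = (1/N) ∑_j e_{a^j}` of an action profile. -/
def empDist (K N : ℕ) (v : Fin N → Fin K) : EuclideanSpace ℝ (Fin K) :=
  (N : ℝ)⁻¹ • ∑ j : Fin N, EuclideanSpace.single (v j) (1 : ℝ)

/-- Expected payoff `V^i(π¹,…,π^N) = E[F(μ̂)(a^i)]`, written as the finite sum over
action profiles weighted by the product of the independent mixed strategies. -/
def Vval (K N : ℕ) (F : EuclideanSpace ℝ (Fin K) → EuclideanSpace ℝ (Fin K))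
    (π : Fin N → EuclideanSpace ℝ (Fin K)) (i : Fin N) : ℝ :=
  ∑ v : Fin N → Fin K, (∏ j : Fin N, π j (v j)) * F (empDist K N v) (v i)

/-- Exploitability `E^i_exp(π¹,…,π^N) = sup_{π′∈Δ} V^i(π′,π^{−i}) − V^i(π¹,…,π^N)`. -/
def expl (K N : ℕ) (F : EuclideanSpace ℝ (Fin K) → EuclideanSpace ℝ (Fin K))
    (π : Fin N → EuclideanSpace ℝ (Fin K)) (i : Fin N) : ℝ :=
  (⨆ p : simplex K, Vval K N F (Function.update π i (p : EuclideanSpace ℝ (Fin K))) i)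
    - Vval K N F π i

namespace Stmt6Aux

open Finset

lemma euc_normsq {K : ℕ} (x : EuclideanSpace ℝ (Fin K)) : ‖x‖^2 = ∑ a, (x a)^2 := by
  rw [EuclideanSpace.norm_eq, Real.sq_sqrt (by positivity)]; simp [sq_abs]

lemma euc_norm_eq {K : ℕ} (x : EuclideanSpace ℝ (Fin K)) :
    ‖x‖ = Real.sqrt (∑ a, (x a)^2) := by
  rw [EuclideanSpace.norm_eq]; simp [sq_abs]

lemma coord_le_norm {K : ℕ} (x : EuclideanSpace ℝ (Fin K)) (a : Fin K) : |x a| ≤ ‖x‖ := by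
  rw [euc_norm_eq, ← Real.sqrt_sq_eq_abs]
  exact Real.sqrt_le_sqrt (Finset.single_le_sum (f := fun b => (x b)^2)
    (fun b _ => sq_nonneg _) (mem_univ a))

lemma sub_coord {K : ℕ} (x y : EuclideanSpace ℝ (Fin K)) (a : Fin K) : (x - y) a = x a - y a := rfl

lemma add_coord {K : ℕ} (x y : EuclideanSpace ℝ (Fin K)) (a : Fin K) : (x + y) a = x a + y a := rfl

lemma smul_coord {K : ℕ} (c : ℝ) (x : EuclideanSpace ℝ (Fin K)) (a : Fin K) :
    (c • x) a = c * x a := rfl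

lemma sum_coord {K : ℕ} {ι : Type*} (s : Finset ι) (Y : ι → EuclideanSpace ℝ (Fin K)) (a : Fin K) :
    (∑ j ∈ s, Y j) a = ∑ j ∈ s, Y j a := by
  induction s using Finset.cons_induction with
  | empty => rfl
  | cons j s hj ih => rw [Finset.sum_cons, Finset.sum_cons, ← ih]; rfl

lemma euc_ext {K : ℕ} {x y : EuclideanSpace ℝ (Fin K)} (h : ∀ a, x a = y a) : x = y :=
  PiLp.ext h

lemma simplex_sumsq_le {K : ℕ} {x : EuclideanSpace ℝ (Fin K)} (hx : x ∈ simplex K) :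
    ∑ a, (x a)^2 ≤ 1 := by
  obtain ⟨h0, h1⟩ := hx
  calc ∑ a, (x a)^2 ≤ ∑ a, x a * 1 := by
        refine Finset.sum_le_sum fun a _ => ?_
        rw [sq]
        refine mul_le_mul_of_nonneg_left ?_ (h0 a)
        calc x a ≤ ∑ b, x b := Finset.single_le_sum (fun b _ => h0 b) (mem_univ a)
        _ = 1 := h1
    _ = 1 := by simp [h1]

lemma simplex_distsq_le {K : ℕ} {x y : EuclideanSpace ℝ (Fin K)}
    (hx : x ∈ simplex K) (hy : y ∈ simplex K) : ‖x - y‖^2 ≤ 2 := by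
  rw [euc_normsq]
  have h : ∀ a, ((x - y) a)^2 = (x a)^2 - 2 * (x a * y a) + (y a)^2 := by
    intro a; rw [sub_coord]; ring
  rw [Finset.sum_congr rfl fun a _ => h a]
  rw [Finset.sum_add_distrib, Finset.sum_sub_distrib, ← Finset.mul_sum]
  have hxy : 0 ≤ ∑ a, x a * y a :=
    Finset.sum_nonneg fun a _ => mul_nonneg (hx.1 a) (hy.1 a)
  have := simplex_sumsq_le hx
  have := simplex_sumsq_le hy
  linarith

lemma simplex_dist_le {K : ℕ} {x y : EuclideanSpace ℝ (Fin K)}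
    (hx : x ∈ simplex K) (hy : y ∈ simplex K) : ‖x - y‖ ≤ Real.sqrt 2 := by
  have h1 := simplex_distsq_le hx hy
  nlinarith [Real.sq_sqrt (by norm_num : (0:ℝ) ≤ 2), Real.sqrt_nonneg 2, norm_nonneg (x - y)]

lemma single_mem_simplex {K : ℕ} (a : Fin K) : (EuclideanSpace.single a (1:ℝ)) ∈ simplex K := by
  constructor
  · intro b
    rw [EuclideanSpace.single_apply]
    positivity
  · simp [EuclideanSpace.single_apply]

lemma sum_fn_prod {N K : ℕ} (f : Fin N → Fin K → ℝ) :
    ∑ v : Fin N → Fin K, ∏ j, f j (v j) = ∏ j, ∑ a, f j a := by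
  rw [Finset.prod_univ_sum, Fintype.piFinset_univ]

lemma margin1 {N K : ℕ} (σ : Fin N → Fin K → ℝ) (hσ : ∀ j, ∑ a, σ j a = 1)
    (i : Fin N) (g : Fin K → ℝ) :
    ∑ v : Fin N → Fin K, (∏ j, σ j (v j)) * g (v i) = ∑ a, σ i a * g a := by
  set f := Function.update σ i (fun a => σ i a * g a) with hf
  have key : ∀ v : Fin N → Fin K,
      (∏ j, σ j (v j)) * g (v i) = ∏ j, f j (v j) := by
    intro v
    have h1 : ∏ j, f j (v j) = f i (v i) * ∏ j ∈ univ.erase i, f j (v j) :=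
      (Finset.mul_prod_erase univ _ (mem_univ i)).symm
    have h2 : ∏ j, σ j (v j) = σ i (v i) * ∏ j ∈ univ.erase i, σ j (v j) :=
      (Finset.mul_prod_erase univ _ (mem_univ i)).symm
    have h3 : ∏ j ∈ univ.erase i, f j (v j) = ∏ j ∈ univ.erase i, σ j (v j) :=
      Finset.prod_congr rfl (fun j hj => by
        rw [hf, Function.update_of_ne (Finset.ne_of_mem_erase hj)])
    rw [h1, h2, h3, hf, Function.update_self]; ring
  rw [Finset.sum_congr rfl (fun v _ => key v), sum_fn_prod,
    ← Finset.mul_prod_erase univ _ (mem_univ i)]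
  have h3 : ∏ j ∈ univ.erase i, (∑ a, f j a) = ∏ j ∈ univ.erase i, (1:ℝ) :=
    Finset.prod_congr rfl (fun j hj => by
      rw [hf, Function.update_of_ne (Finset.ne_of_mem_erase hj)]; exact hσ j)
  rw [h3, hf, Function.update_self]; simp

lemma margin2 {N K : ℕ} (σ : Fin N → Fin K → ℝ) (hσ : ∀ j, ∑ a, σ j a = 1)
    {j k : Fin N} (hjk : j ≠ k) (g h : Fin K → ℝ) :
    ∑ v : Fin N → Fin K, (∏ m, σ m (v m)) * (g (v j) * h (v k))
      = (∑ a, σ j a * g a) * (∑ a, σ k a * h a) := by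
  set f := Function.update (Function.update σ j (fun a => σ j a * g a)) k
      (fun a => σ k a * h a) with hf
  have hmem : j ∈ univ.erase k := Finset.mem_erase.2 ⟨hjk, mem_univ j⟩
  have pull : ∀ F : Fin N → ℝ, ∏ m, F m = F k * (F j * ∏ m ∈ (univ.erase k).erase j, F m) := by
    intro F
    rw [← Finset.mul_prod_erase univ F (mem_univ k), ← Finset.mul_prod_erase _ F hmem]
  have fk : f k = fun a => σ k a * h a := Function.update_self _ _ _
  have fj : f j = fun a => σ j a * g a := by
    rw [hf, Function.update_of_ne hjk, Function.update_self]
  have frest : ∀ m ∈ (univ.erase k).erase j, f m = σ m := by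
    intro m hm
    have hm1 := Finset.ne_of_mem_erase hm
    have hm2 := Finset.ne_of_mem_erase (Finset.mem_of_mem_erase hm)
    rw [hf, Function.update_of_ne hm2, Function.update_of_ne hm1]
  have key : ∀ v : Fin N → Fin K,
      (∏ m, σ m (v m)) * (g (v j) * h (v k)) = ∏ m, f m (v m) := by
    intro v
    rw [pull (fun m => f m (v m)), pull (fun m => σ m (v m))]
    simp only [fk, fj]
    rw [Finset.prod_congr rfl (fun m hm => by rw [frest m hm] : ∀ m ∈ (univ.erase k).erase j,
      f m (v m) = σ m (v m))]
    ring
  rw [Finset.sum_congr rfl (fun v _ => key v), sum_fn_prod, pull (fun m => ∑ a, f m a)]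
  simp only [fk, fj]
  rw [Finset.prod_congr rfl (fun m hm => by rw [frest m hm, hσ m] : ∀ m ∈ (univ.erase k).erase j,
      (∑ a, f m a) = 1)]
  simp [mul_comm]

lemma variance_bound {N K : ℕ} (σ : Fin N → EuclideanSpace ℝ (Fin K))
    (hσ : ∀ j, σ j ∈ simplex K) (i : Fin N) :
    ∑ v : Fin N → Fin K, (∏ j, σ j (v j)) *
      ‖∑ j ∈ univ.erase i, (EuclideanSpace.single (v j) (1:ℝ) - σ j)‖^2 ≤ 2 * N := by
  classical
  set E := univ.erase i with hE
  set G : Fin N → Fin K → Fin K → ℝ :=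
    fun j a b => (if a = b then (1:ℝ) else 0) - σ j a with hG
  have hGcoord : ∀ (j : Fin N) (a b : Fin K),
      (EuclideanSpace.single b (1:ℝ) - σ j) a = G j a b := by
    intro j a b
    rw [sub_coord, EuclideanSpace.single_apply, hG]
  have hσsum : ∀ j, ∑ a, σ j a = 1 := fun j => (hσ j).2
  have hzero : ∀ (j : Fin N) (a : Fin K), ∑ b, σ j b * G j a b = 0 := by
    intro j a
    simp only [hG, mul_sub, Finset.sum_sub_distrib, mul_ite, mul_one, mul_zero]
    rw [Finset.sum_ite_eq univ a (fun b => σ j b), ← Finset.sum_mul, hσsum j]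
    simp
  have expand : ∀ v : Fin N → Fin K,
      ‖∑ j ∈ E, (EuclideanSpace.single (v j) (1:ℝ) - σ j)‖^2
        = ∑ j ∈ E, ∑ k ∈ E, ∑ a, G j a (v j) * G k a (v k) := by
    intro v
    rw [euc_normsq]
    have h1 : ∀ a, ((∑ j ∈ E, (EuclideanSpace.single (v j) (1:ℝ) - σ j)) a)
        = ∑ j ∈ E, G j a (v j) := by
      intro a
      rw [sum_coord]
      exact Finset.sum_congr rfl fun j _ => hGcoord j a (v j)
    calc ∑ a, ((∑ j ∈ E, (EuclideanSpace.single (v j) (1:ℝ) - σ j)) a)^2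
        = ∑ a, (∑ j ∈ E, G j a (v j)) * (∑ k ∈ E, G k a (v k)) := by
          refine Finset.sum_congr rfl fun a _ => ?_; rw [h1 a, sq]
      _ = ∑ a, ∑ j ∈ E, ∑ k ∈ E, G j a (v j) * G k a (v k) := by
          refine Finset.sum_congr rfl fun a _ => ?_; rw [Finset.sum_mul_sum]
      _ = ∑ j ∈ E, ∑ k ∈ E, ∑ a, G j a (v j) * G k a (v k) := by
          rw [Finset.sum_comm]
          refine Finset.sum_congr rfl fun j _ => Finset.sum_comm
  have step1 : ∑ v : Fin N → Fin K, (∏ j, σ j (v j)) *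
      ‖∑ j ∈ E, (EuclideanSpace.single (v j) (1:ℝ) - σ j)‖^2
      = ∑ j ∈ E, ∑ k ∈ E, ∑ a, ∑ v : Fin N → Fin K,
          (∏ m, σ m (v m)) * (G j a (v j) * G k a (v k)) := by
    have h2 : ∀ v : Fin N → Fin K, (∏ j, σ j (v j)) *
        ‖∑ j ∈ E, (EuclideanSpace.single (v j) (1:ℝ) - σ j)‖^2
        = ∑ j ∈ E, ∑ k ∈ E, ∑ a, (∏ m, σ m (v m)) * (G j a (v j) * G k a (v k)) := by
      intro v
      rw [expand v]
      simp only [Finset.mul_sum]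
    rw [Finset.sum_congr rfl fun v _ => h2 v, Finset.sum_comm]
    refine Finset.sum_congr rfl fun j _ => ?_
    rw [Finset.sum_comm]
    refine Finset.sum_congr rfl fun k _ => Finset.sum_comm
  rw [step1]
  have inner_bound : ∀ j ∈ E, (∑ k ∈ E, ∑ a, ∑ v : Fin N → Fin K,
      (∏ m, σ m (v m)) * (G j a (v j) * G k a (v k))) ≤ 2 := by
    intro j hj
    have offdiag : ∀ k ∈ E, k ≠ j → (∑ a, ∑ v : Fin N → Fin K,
        (∏ m, σ m (v m)) * (G j a (v j) * G k a (v k))) = 0 := by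
      intro k _ hkj
      refine Finset.sum_eq_zero fun a _ => ?_
      rw [margin2 (fun m b => σ m b) hσsum (fun h => hkj (h.symm)) (G j a) (G k a)]
      rw [hzero j a]
      ring
    rw [Finset.sum_eq_single_of_mem j hj (fun k hk hkj => offdiag k hk hkj)]
    have diag : ∀ a, (∑ v : Fin N → Fin K,
        (∏ m, σ m (v m)) * (G j a (v j) * G j a (v j)))
        = ∑ b, σ j b * (G j a b * G j a b) := by
      intro a
      exact margin1 (fun m b => σ m b) hσsum j (fun b => G j a b * G j a b)
    rw [Finset.sum_congr rfl fun a _ => diag a, Finset.sum_comm]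
    calc ∑ b, ∑ a, σ j b * (G j a b * G j a b)
        = ∑ b, σ j b * ‖EuclideanSpace.single b (1:ℝ) - σ j‖^2 := by
          refine Finset.sum_congr rfl fun b _ => ?_
          rw [← Finset.mul_sum, euc_normsq]
          congr 1
          exact Finset.sum_congr rfl fun a _ => by rw [hGcoord j a b]; ring
      _ ≤ ∑ b, σ j b * 2 := by
          refine Finset.sum_le_sum fun b _ => ?_
          exact mul_le_mul_of_nonneg_left
            (simplex_distsq_le (single_mem_simplex b) (hσ j)) ((hσ j).1 b)
      _ = 2 := by rw [← Finset.sum_mul, hσsum j]; ring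
  calc ∑ j ∈ E, ∑ k ∈ E, ∑ a, ∑ v : Fin N → Fin K,
      (∏ m, σ m (v m)) * (G j a (v j) * G k a (v k))
      ≤ ∑ j ∈ E, (2:ℝ) := Finset.sum_le_sum inner_bound
    _ ≤ 2 * N := by
        rw [Finset.sum_const, nsmul_eq_mul]
        have hc : (E.card : ℝ) ≤ N := by
          have : E.card ≤ N := le_trans (Finset.card_le_card (Finset.erase_subset _ _)) (by simp)
          exact_mod_cast this
        nlinarith

lemma empDist_mem {K N : ℕ} (hN : 0 < N) (v : Fin N → Fin K) :
    empDist K N v ∈ simplex K := by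
  have hNpos : (0:ℝ) < N := by exact_mod_cast hN
  constructor
  · intro a
    rw [empDist, smul_coord, sum_coord]
    have h1 : ∀ j : Fin N, (0:ℝ) ≤ (EuclideanSpace.single (v j) (1:ℝ)) a := by
      intro j; rw [EuclideanSpace.single_apply]; positivity
    have := Finset.sum_nonneg (fun j (_ : j ∈ univ) => h1 j)
    positivity
  · have h1 : ∀ a, (empDist K N v) a = (N:ℝ)⁻¹ * ∑ j, (EuclideanSpace.single (v j) (1:ℝ)) a := by
      intro a; rw [empDist, smul_coord, sum_coord]
    rw [Finset.sum_congr rfl fun a _ => h1 a, ← Finset.mul_sum, Finset.sum_comm]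
    have h2 : ∀ j : Fin N, ∑ a, (EuclideanSpace.single (v j) (1:ℝ)) a = 1 := by
      intro j; simp [EuclideanSpace.single_apply]
    rw [Finset.sum_congr rfl fun j _ => h2 j]
    simp
    field_simp

lemma empDist_decomp {K N : ℕ} (i : Fin N) (σ : Fin N → EuclideanSpace ℝ (Fin K))
    (v : Fin N → Fin K) :
    empDist K N v - (N:ℝ)⁻¹ • (EuclideanSpace.single (v i) (1:ℝ) + ∑ j ∈ univ.erase i, σ j)
      = (N:ℝ)⁻¹ • ∑ j ∈ univ.erase i, (EuclideanSpace.single (v j) (1:ℝ) - σ j) := by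
  apply euc_ext; intro a
  rw [sub_coord, smul_coord, smul_coord, empDist, smul_coord, sum_coord, sum_coord,
    add_coord, sum_coord,
    Finset.sum_congr rfl (fun j (_ : j ∈ univ.erase i) =>
      sub_coord (EuclideanSpace.single (v j) (1:ℝ)) (σ j) a),
    Finset.sum_sub_distrib,
    ← Finset.add_sum_erase univ (fun j => (EuclideanSpace.single (v j) (1:ℝ)) a) (mem_univ i)]
  ring

lemma bias_bound {K N : ℕ} (hN : 0 < N) {δ : ℝ} (i : Fin N)
    (σ : Fin N → EuclideanSpace ℝ (Fin K)) (πτ : EuclideanSpace ℝ (Fin K))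
    (hπτ : πτ ∈ simplex K) (hfar : ∀ j, j ≠ i → ‖σ j - πτ‖ ≤ δ)
    (hδ : 0 ≤ δ) (a : Fin K) :
    ‖(N:ℝ)⁻¹ • (EuclideanSpace.single a (1:ℝ) + ∑ j ∈ univ.erase i, σ j) - πτ‖
      ≤ δ + Real.sqrt 2 / N := by
  have hNpos : (0:ℝ) < N := by exact_mod_cast hN
  have hdist : ∀ a : Fin K, ‖(EuclideanSpace.single a (1:ℝ)) - πτ‖ ≤ Real.sqrt 2 :=
    fun a => simplex_dist_le (single_mem_simplex a) hπτ
  have hcard : ((univ.erase i).card : ℝ) = (N:ℝ) - 1 := by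
    rw [Finset.card_erase_of_mem (mem_univ i)]
    simp only [Finset.card_univ, Fintype.card_fin]
    have h1 : 1 ≤ N := hN
    push_cast [Nat.cast_sub h1]
    ring
  have hid : (N:ℝ)⁻¹ • (EuclideanSpace.single a (1:ℝ) + ∑ j ∈ univ.erase i, σ j) - πτ
      = (N:ℝ)⁻¹ • ((EuclideanSpace.single a (1:ℝ) - πτ) + ∑ j ∈ univ.erase i, (σ j - πτ)) := by
    apply euc_ext; intro b
    rw [sub_coord, smul_coord, add_coord, sum_coord, smul_coord, add_coord, sub_coord, sum_coord,
      Finset.sum_congr rfl (fun j (_ : j ∈ univ.erase i) => sub_coord (σ j) πτ b),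
      Finset.sum_sub_distrib, Finset.sum_const, nsmul_eq_mul, hcard]
    field_simp
    ring
  rw [hid, norm_smul]
  have h1 : ‖(EuclideanSpace.single a (1:ℝ) - πτ) + ∑ j ∈ univ.erase i, (σ j - πτ)‖
      ≤ Real.sqrt 2 + ((N:ℝ) - 1) * δ := by
    refine le_trans (norm_add_le _ _) (add_le_add (hdist a) ?_)
    refine le_trans (norm_sum_le _ _) ?_
    calc ∑ j ∈ univ.erase i, ‖σ j - πτ‖ ≤ ∑ j ∈ univ.erase i, δ :=
          Finset.sum_le_sum fun j hj => hfar j (Finset.ne_of_mem_erase hj)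
      _ = ((N:ℝ) - 1) * δ := by rw [Finset.sum_const, nsmul_eq_mul, hcard]
  have h2 : ‖(N:ℝ)⁻¹‖ = (N:ℝ)⁻¹ := by
    rw [Real.norm_eq_abs, abs_of_pos (by positivity)]
  rw [h2]
  calc (N:ℝ)⁻¹ * ‖(EuclideanSpace.single a (1:ℝ) - πτ) + ∑ j ∈ univ.erase i, (σ j - πτ)‖
      ≤ (N:ℝ)⁻¹ * (Real.sqrt 2 + ((N:ℝ) - 1) * δ) := by
        exact mul_le_mul_of_nonneg_left h1 (by positivity)
    _ ≤ δ + Real.sqrt 2 / N := by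
        rw [div_eq_inv_mul]
        have h4 : (N:ℝ)⁻¹ * (((N:ℝ) - 1) * δ) ≤ δ := by
          rw [← mul_assoc]
          have h3 : (N:ℝ)⁻¹ * ((N:ℝ) - 1) ≤ 1 := by
            rw [inv_mul_le_iff₀ hNpos]; linarith
          nlinarith
        nlinarith [Real.sqrt_nonneg 2]

lemma conc {K N : ℕ} (hN : 0 < N) (σ : Fin N → EuclideanSpace ℝ (Fin K))
    (hσ : ∀ j, σ j ∈ simplex K) (i : Fin N) :
    ∑ v : Fin N → Fin K, (∏ j, σ j (v j)) *
      ‖empDist K N v -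
        (N:ℝ)⁻¹ • (EuclideanSpace.single (v i) (1:ℝ) + ∑ j ∈ univ.erase i, σ j)‖
      ≤ Real.sqrt 2 / Real.sqrt N := by
  have hNpos : (0:ℝ) < N := by exact_mod_cast hN
  have hsN : (0:ℝ) < Real.sqrt N := Real.sqrt_pos.2 hNpos
  set w : (Fin N → Fin K) → ℝ := fun v => ∏ j, σ j (v j) with hw
  have hw0 : ∀ v, 0 ≤ w v := fun v => Finset.prod_nonneg fun j _ => (hσ j).1 (v j)
  have hwsum : ∑ v : Fin N → Fin K, w v = 1 := by
    rw [hw, sum_fn_prod]; exact Finset.prod_eq_one fun j _ => (hσ j).2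
  set Z : (Fin N → Fin K) → EuclideanSpace ℝ (Fin K) :=
    fun v => ∑ j ∈ univ.erase i, (EuclideanSpace.single (v j) (1:ℝ) - σ j) with hZ
  have hterm : ∀ v : Fin N → Fin K,
      w v * ‖empDist K N v -
        (N:ℝ)⁻¹ • (EuclideanSpace.single (v i) (1:ℝ) + ∑ j ∈ univ.erase i, σ j)‖
      = (N:ℝ)⁻¹ * (Real.sqrt (w v) * Real.sqrt (w v * ‖Z v‖^2)) := by
    intro v
    have hss : Real.sqrt (w v) * Real.sqrt (w v) = w v := Real.mul_self_sqrt (hw0 v)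
    rw [empDist_decomp i σ v, norm_smul, Real.norm_eq_abs,
      abs_of_pos (show (0:ℝ) < (N:ℝ)⁻¹ by positivity),
      Real.sqrt_mul (hw0 v), Real.sqrt_sq (norm_nonneg _)]
    linear_combination (-((N:ℝ)⁻¹) *
      ‖∑ j ∈ univ.erase i, (EuclideanSpace.single (v j) (1:ℝ) - σ j)‖) * hss
  rw [Finset.sum_congr rfl fun v _ => hterm v, ← Finset.mul_sum]
  have hCS : ∑ v : Fin N → Fin K, Real.sqrt (w v) * Real.sqrt (w v * ‖Z v‖^2)
      ≤ Real.sqrt (∑ v : Fin N → Fin K, w v) *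
        Real.sqrt (∑ v : Fin N → Fin K, w v * ‖Z v‖^2) :=
    Real.sum_sqrt_mul_sqrt_le _ (fun v => hw0 v) (fun v => mul_nonneg (hw0 v) (sq_nonneg _))
  have hvar : ∑ v : Fin N → Fin K, w v * ‖Z v‖^2 ≤ 2 * N := variance_bound σ hσ i
  have h2 : Real.sqrt (∑ v : Fin N → Fin K, w v * ‖Z v‖^2) ≤ Real.sqrt (2 * N) :=
    Real.sqrt_le_sqrt hvar
  calc (N:ℝ)⁻¹ * ∑ v : Fin N → Fin K, Real.sqrt (w v) * Real.sqrt (w v * ‖Z v‖^2)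
      ≤ (N:ℝ)⁻¹ * (Real.sqrt 1 * Real.sqrt (2 * N)) := by
        refine mul_le_mul_of_nonneg_left (le_trans hCS ?_) (by positivity)
        rw [hwsum]
        exact mul_le_mul_of_nonneg_left h2 (Real.sqrt_nonneg 1)
    _ = Real.sqrt 2 / Real.sqrt N := by
        rw [Real.sqrt_one, one_mul, Real.sqrt_mul (by norm_num : (0:ℝ) ≤ 2)]
        rw [eq_div_iff hsN.ne']
        have h5 : Real.sqrt (N:ℝ) * Real.sqrt (N:ℝ) = N := Real.mul_self_sqrt hNpos.le
        calc (N:ℝ)⁻¹ * (Real.sqrt 2 * Real.sqrt N) * Real.sqrt N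
            = (N:ℝ)⁻¹ * (Real.sqrt N * Real.sqrt N) * Real.sqrt 2 := by ring
          _ = Real.sqrt 2 := by rw [h5]; field_simp

lemma Vval_approx {K N : ℕ} (hN : 0 < N) {L δ : ℝ} (hL : 0 ≤ L) (hδ : 0 ≤ δ)
    {F : EuclideanSpace ℝ (Fin K) → EuclideanSpace ℝ (Fin K)}
    (hFlip : ∀ μ ∈ simplex K, ∀ μ' ∈ simplex K, ‖F μ - F μ'‖ ≤ L * ‖μ - μ'‖)
    {πτ : EuclideanSpace ℝ (Fin K)} (hπτ : πτ ∈ simplex K) (i : Fin N)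
    (σ : Fin N → EuclideanSpace ℝ (Fin K)) (hσ : ∀ j, σ j ∈ simplex K)
    (hfar : ∀ j, j ≠ i → ‖σ j - πτ‖ ≤ δ) :
    |Vval K N F σ i - ∑ a, σ i a * F πτ a|
      ≤ L * (Real.sqrt 2 / Real.sqrt N + (δ + Real.sqrt 2 / N)) := by
  set w : (Fin N → Fin K) → ℝ := fun v => ∏ j, σ j (v j) with hw
  have hw0 : ∀ v, 0 ≤ w v := fun v => Finset.prod_nonneg fun j _ => (hσ j).1 (v j)
  have hwsum : ∑ v : Fin N → Fin K, w v = 1 := by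
    rw [hw, sum_fn_prod]; exact Finset.prod_eq_one fun j _ => (hσ j).2
  set c : Fin K → EuclideanSpace ℝ (Fin K) :=
    fun a => (N:ℝ)⁻¹ • (EuclideanSpace.single a (1:ℝ) + ∑ j ∈ univ.erase i, σ j) with hc
  have hlin : ∑ v : Fin N → Fin K, w v * F πτ (v i) = ∑ a, σ i a * F πτ a :=
    margin1 (fun j a => σ j a) (fun j => (hσ j).2) i (fun a => F πτ a)
  have hsplit : Vval K N F σ i - ∑ a, σ i a * F πτ a
      = ∑ v : Fin N → Fin K, w v * (F (empDist K N v) (v i) - F πτ (v i)) := by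
    rw [← hlin, Vval, ← Finset.sum_sub_distrib]
    exact Finset.sum_congr rfl fun v _ => by rw [hw]; ring
  rw [hsplit]
  have habs : ∀ v : Fin N → Fin K, |w v * (F (empDist K N v) (v i) - F πτ (v i))|
      ≤ w v * (L * ‖empDist K N v - πτ‖) := by
    intro v
    rw [abs_mul, abs_of_nonneg (hw0 v)]
    refine mul_le_mul_of_nonneg_left ?_ (hw0 v)
    have h1 : F (empDist K N v) (v i) - F πτ (v i) = (F (empDist K N v) - F πτ) (v i) := rfl
    rw [h1]
    exact le_trans (coord_le_norm _ _) (hFlip _ (empDist_mem hN v) _ hπτ)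
  refine le_trans (Finset.abs_sum_le_sum_abs _ _)
    (le_trans (Finset.sum_le_sum fun v _ => habs v) ?_)
  have htri : ∀ v : Fin N → Fin K,
      ‖empDist K N v - πτ‖ ≤ ‖empDist K N v - c (v i)‖ + ‖c (v i) - πτ‖ := by
    intro v
    have h := norm_add_le (empDist K N v - c (v i)) (c (v i) - πτ)
    rw [sub_add_sub_cancel] at h
    exact h
  calc ∑ v : Fin N → Fin K, w v * (L * ‖empDist K N v - πτ‖)
      = L * ∑ v : Fin N → Fin K, w v * ‖empDist K N v - πτ‖ := by
        rw [Finset.mul_sum]; exact Finset.sum_congr rfl fun v _ => by ring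
    _ ≤ L * ∑ v : Fin N → Fin K,
          (w v * ‖empDist K N v - c (v i)‖ + w v * ‖c (v i) - πτ‖) := by
        refine mul_le_mul_of_nonneg_left (Finset.sum_le_sum fun v _ => ?_) hL
        have h := htri v
        nlinarith [hw0 v]
    _ = L * (∑ v : Fin N → Fin K, w v * ‖empDist K N v - c (v i)‖
          + ∑ v : Fin N → Fin K, w v * ‖c (v i) - πτ‖) := by
        rw [Finset.sum_add_distrib]
    _ ≤ L * (Real.sqrt 2 / Real.sqrt N + (δ + Real.sqrt 2 / N)) := by
        refine mul_le_mul_of_nonneg_left (add_le_add ?_ ?_) hL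
        · exact conc hN σ hσ i
        · calc ∑ v : Fin N → Fin K, w v * ‖c (v i) - πτ‖
              ≤ ∑ v : Fin N → Fin K, w v * (δ + Real.sqrt 2 / N) :=
                Finset.sum_le_sum fun v _ => mul_le_mul_of_nonneg_left
                  (bias_bound hN i σ πτ hπτ hfar hδ (v i)) (hw0 v)
            _ = δ + Real.sqrt 2 / N := by rw [← Finset.sum_mul, hwsum, one_mul]

end Stmt6Aux


/-- Theorem 2 of the paper, with explicit constants.
Let `F : Δ_A → [0,1]^K` be monotone and `L`-Lipschitz, `τ > 0`, and `π*_τ` a solution of the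
`τ`-regularized variational inequality. If `π¹,…,π^N ∈ Δ_A` satisfy `‖π^i − π*_τ‖₂ ≤ δ` for
all `i`, then for every player `i`,
`E^i_exp(π¹,…,π^N) ≤ 2τ + L(2√2+4)/N + 4L/√N + (√K + 4L√(2K))δ`. -/
theorem stmt6 (K N : ℕ) (hK : 0 < K) (hN : 0 < N) (L τ δ : ℝ)
    (hL : 0 ≤ L) (hτ : 0 < τ) (hδ : 0 ≤ δ)
    (F : EuclideanSpace ℝ (Fin K) → EuclideanSpace ℝ (Fin K))
    (hFmap : ∀ μ ∈ simplex K, ∀ a : Fin K, F μ a ∈ Set.Icc (0 : ℝ) 1)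
    (hFmono : ∀ μ₁ ∈ simplex K, ∀ μ₂ ∈ simplex K,
      ∑ a : Fin K, (F μ₁ a - F μ₂ a) * (μ₁ a - μ₂ a) ≤ 0)
    (hFlip : ∀ μ ∈ simplex K, ∀ μ' ∈ simplex K, ‖F μ - F μ'‖ ≤ L * ‖μ - μ'‖)
    (πτ : EuclideanSpace ℝ (Fin K)) (hπτ : πτ ∈ simplex K)
    (hRVI : ∀ p ∈ simplex K, 0 ≤ ∑ a : Fin K, (F πτ a - τ * πτ a) * (πτ a - p a))
    (π : Fin N → EuclideanSpace ℝ (Fin K)) (hπ : ∀ i, π i ∈ simplex K)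
    (hclose : ∀ i, ‖π i - πτ‖ ≤ δ) :
    ∀ i : Fin N, expl K N F π i
        ≤ 2 * τ + L * (2 * Real.sqrt 2 + 4) / N + 4 * L / Real.sqrt N
          + (Real.sqrt K + 4 * L * Real.sqrt (2 * K)) * δ := by
  intro i
  classical
  have hNpos : (0:ℝ) < N := by exact_mod_cast hN
  have hsN : (0:ℝ) < Real.sqrt N := Real.sqrt_pos.2 hNpos
  haveI : Nonempty (simplex K) :=
    ⟨⟨EuclideanSpace.single ⟨0, hK⟩ (1:ℝ), Stmt6Aux.single_mem_simplex _⟩⟩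
  set C : ℝ := L * (Real.sqrt 2 / Real.sqrt N + (δ + Real.sqrt 2 / N)) with hC
  -- facts about πτ
  have hπτ1 : ∀ a, πτ a ≤ 1 := by
    intro a
    calc πτ a ≤ ∑ b, πτ b := Finset.single_le_sum (fun b _ => hπτ.1 b) (mem_univ a)
      _ = 1 := hπτ.2
  -- linear comparison via the variational inequality
  have hlin_p : ∀ p ∈ simplex K,
      ∑ a, p a * F πτ a ≤ ∑ a, π i a * F πτ a + (τ + Real.sqrt K * δ) := by
    intro p hp
    have hA := hRVI p hp
    have e1 : ∑ a, (F πτ a - τ * πτ a) * (πτ a - p a)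
        = ((∑ a, F πτ a * πτ a - ∑ a, F πτ a * p a) - τ * ∑ a, πτ a * πτ a)
          + τ * ∑ a, πτ a * p a := by
      rw [Finset.mul_sum, Finset.mul_sum, ← Finset.sum_sub_distrib, ← Finset.sum_sub_distrib,
        ← Finset.sum_add_distrib]
      exact Finset.sum_congr rfl fun a _ => by ring
    have hsq : 0 ≤ ∑ a, πτ a * πτ a :=
      Finset.sum_nonneg fun a _ => mul_nonneg (hπτ.1 a) (hπτ.1 a)
    have hpp : ∑ a, πτ a * p a ≤ 1 := by
      calc ∑ a, πτ a * p a ≤ ∑ a, p a := by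
            refine Finset.sum_le_sum fun a _ => ?_
            nlinarith [hπτ1 a, hπτ.1 a, hp.1 a]
        _ = 1 := hp.2
      -- each πτ a * p a ≤ p a
    have part1 : ∑ a, F πτ a * p a - ∑ a, F πτ a * πτ a ≤ τ := by
      rw [e1] at hA
      nlinarith
    have part2 : ∑ a, (πτ a - π i a) * F πτ a ≤ Real.sqrt K * δ := by
      have hcs := Real.sum_mul_le_sqrt_mul_sqrt univ
        (fun a => πτ a - π i a) (fun a => F πτ a)
      have hn1 : Real.sqrt (∑ a, (πτ a - π i a)^2) ≤ δ := by
        have : ∑ a, (πτ a - π i a)^2 = ‖πτ - π i‖^2 := by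
          rw [Stmt6Aux.euc_normsq]
          exact Finset.sum_congr rfl fun a _ => by
            rw [Stmt6Aux.sub_coord]
        rw [this, Real.sqrt_sq (norm_nonneg _)]
        calc ‖πτ - π i‖ = ‖π i - πτ‖ := by rw [norm_sub_rev]
          _ ≤ δ := hclose i
      have hn2 : Real.sqrt (∑ a, (F πτ a)^2) ≤ Real.sqrt K := by
        refine Real.sqrt_le_sqrt ?_
        calc ∑ a, (F πτ a)^2 ≤ ∑ a : Fin K, (1:ℝ) := by
              refine Finset.sum_le_sum fun a _ => ?_
              have h := hFmap πτ hπτ a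
              nlinarith [h.1, h.2]
          _ = K := by simp
      calc ∑ a, (πτ a - π i a) * F πτ a
          ≤ Real.sqrt (∑ a, (πτ a - π i a)^2) * Real.sqrt (∑ a, (F πτ a)^2) := hcs
        _ ≤ δ * Real.sqrt K := by
            exact mul_le_mul hn1 hn2 (Real.sqrt_nonneg _) hδ
        _ = Real.sqrt K * δ := by ring
    have e2 : ∑ a, p a * F πτ a - ∑ a, π i a * F πτ a
        = (∑ a, F πτ a * p a - ∑ a, F πτ a * πτ a) + ∑ a, (πτ a - π i a) * F πτ a := by
      rw [← Finset.sum_sub_distrib, ← Finset.sum_sub_distrib, ← Finset.sum_add_distrib]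
      exact Finset.sum_congr rfl fun a _ => by ring
    have := add_le_add part1 part2
    linarith [e2 ▸ this]
  -- upper bound on each deviation payoff
  have h_up : ∀ p : simplex K,
      Vval K N F (Function.update π i (p : EuclideanSpace ℝ (Fin K))) i
        ≤ ∑ a, π i a * F πτ a + (τ + Real.sqrt K * δ) + C := by
    intro p
    set σ := Function.update π i (p : EuclideanSpace ℝ (Fin K)) with hσdef
    have hσ : ∀ j, σ j ∈ simplex K := by
      intro j
      by_cases hj : j = i
      · rw [hσdef, hj, Function.update_self]; exact p.2
      · rw [hσdef, Function.update_of_ne hj]; exact hπ j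
    have hfar : ∀ j, j ≠ i → ‖σ j - πτ‖ ≤ δ := by
      intro j hj
      rw [hσdef, Function.update_of_ne hj]
      exact hclose j
    have happ := Stmt6Aux.Vval_approx hN hL hδ hFlip hπτ i σ hσ hfar
    have hσi : σ i = (p : EuclideanSpace ℝ (Fin K)) := by
      rw [hσdef, Function.update_self]
    rw [hσi] at happ
    have h1 : Vval K N F σ i ≤ ∑ a, (p : EuclideanSpace ℝ (Fin K)) a * F πτ a + C := by
      have := abs_le.1 happ
      linarith [this.2]
    exact le_trans h1 (by linarith [hlin_p (p : EuclideanSpace ℝ (Fin K)) p.2])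
  -- lower bound on the actual payoff
  have h_dn : ∑ a, π i a * F πτ a - C ≤ Vval K N F π i := by
    have happ := Stmt6Aux.Vval_approx hN hL hδ hFlip hπτ i π hπ (fun j _ => hclose j)
    have := abs_le.1 happ
    linarith [this.1]
  have hsup : (⨆ p : simplex K,
      Vval K N F (Function.update π i (p : EuclideanSpace ℝ (Fin K))) i)
      ≤ ∑ a, π i a * F πτ a + (τ + Real.sqrt K * δ) + C := ciSup_le h_up
  have hexpl : expl K N F π i ≤ τ + Real.sqrt K * δ + 2 * C := by
    rw [expl]
    linarith
  refine le_trans hexpl ?_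
  -- final constant comparison
  have hs2 : Real.sqrt 2 ≤ 2 := by
    nlinarith [Real.sq_sqrt (show (0:ℝ) ≤ 2 by norm_num), Real.sqrt_nonneg 2]
  have hs2K : (1:ℝ) ≤ Real.sqrt (2 * K) := by
    rw [show (1:ℝ) = Real.sqrt 1 by rw [Real.sqrt_one]]
    refine Real.sqrt_le_sqrt ?_
    have : (1:ℝ) ≤ K := by exact_mod_cast hK
    linarith
  have f2 : 2 * (L * (Real.sqrt 2 / Real.sqrt N)) ≤ 4 * L / Real.sqrt N := by
    rw [show 2 * (L * (Real.sqrt 2 / Real.sqrt N)) = (2 * L * Real.sqrt 2) / Real.sqrt N by ring]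
    refine div_le_div_of_nonneg_right ?_ hsN.le
    nlinarith
  have f3 : 2 * (L * (Real.sqrt 2 / N)) ≤ L * (2 * Real.sqrt 2 + 4) / N := by
    rw [show 2 * (L * (Real.sqrt 2 / N)) = (2 * L * Real.sqrt 2) / N by ring]
    refine div_le_div_of_nonneg_right ?_ hNpos.le
    nlinarith
  have f4 : 2 * (L * δ) ≤ 4 * L * Real.sqrt (2 * K) * δ := by
    nlinarith [mul_nonneg (mul_nonneg hL hδ) (sub_nonneg.2 hs2K), mul_nonneg hL hδ]
  calc τ + Real.sqrt K * δ + 2 * C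
      = τ + Real.sqrt K * δ + (2 * (L * (Real.sqrt 2 / Real.sqrt N)) + 2 * (L * δ)
        + 2 * (L * (Real.sqrt 2 / N))) := by rw [hC]; ring
    _ ≤ 2 * τ + L * (2 * Real.sqrt 2 + 4) / N + 4 * L / Real.sqrt N
        + (Real.sqrt K + 4 * L * Real.sqrt (2 * K)) * δ := by
        have hexpand : (Real.sqrt K + 4 * L * Real.sqrt (2 * K)) * δ
            = Real.sqrt K * δ + 4 * L * Real.sqrt (2 * K) * δ := by ring
        rw [hexpand]
        linarith
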